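/- For a Lie algebra L over a field, there is a short exact sequence 0 → M(L) → L ∧ L → L² → 0, where the map L ∧ L → L² is the commutator map κ′ sending l ∧ l′ to [l, l′]. -/

import Mathlib

open LieAlgebra Matrix Module


open LieAlgebra

section ProdLie
variable {L M : Type*}

instance prodLieRing [LieRing L] [LieRing M] : LieRing (L × M) where
  bracket x y := (⁅x.1, y.1⁆, ⁅x.2, y.2⁆)
  add_lie x y z := by ext <;> simp [add_lie]
  lie_add x y z := by ext <;> simp [lie_add]
  lie_self x := by ext <;> simp
  leibniz_lie x y z := by ext <;> simp

@[simp] theorem prod_bracket_fst [LieRing L] [LieRing M] (x y : L × M) :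
    ⁅x, y⁆.1 = ⁅x.1, y.1⁆ := rfl
@[simp] theorem prod_bracket_snd [LieRing L] [LieRing M] (x y : L × M) :
    ⁅x, y⁆.2 = ⁅x.2, y.2⁆ := rfl

instance prodLieAlgebra (F : Type*) [CommRing F] [LieRing L] [LieRing M]
    [LieAlgebra F L] [LieAlgebra F M] : LieAlgebra F (L × M) where
  lie_smul t x y := by ext <;> simp
end ProdLie

section AbL
variable (F : Type*) [Field F]

/-- The abelian Lie algebra of dimension `k` over `F`. -/
def AbLie (k : ℕ) : Type _ := Fin k → F

instance (k : ℕ) : AddCommGroup (AbLie F k) := Pi.addCommGroup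
instance (k : ℕ) : Module F (AbLie F k) := Pi.module _ _ _

instance (k : ℕ) : LieRing (AbLie F k) where
  bracket _ _ := 0
  add_lie _ _ _ := (zero_add 0).symm
  lie_add _ _ _ := (zero_add 0).symm
  lie_self _ := rfl
  leibniz_lie _ _ _ := (zero_add 0).symm

instance (k : ℕ) : LieAlgebra F (AbLie F k) where
  lie_smul t x y := (smul_zero t).symm

instance (k : ℕ) : FiniteDimensional F (AbLie F k) :=
  (inferInstance : FiniteDimensional F (Fin k → F))

instance (k : ℕ) : IsLieAbelian (AbLie F k) := ⟨fun _ _ => rfl⟩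
end AbL
open Matrix
section Heis
variable (F : Type*) [Field F]

/-- The Heisenberg Lie algebra `H(m)` of dimension `2m+1`. -/
def Heis (m : ℕ) : Type _ := (Fin m → F) × (Fin m → F) × F

instance (m : ℕ) : AddCommGroup (Heis F m) := Prod.instAddCommGroup
instance (m : ℕ) : Module F (Heis F m) := Prod.instModule

instance (m : ℕ) : LieRing (Heis F m) where
  bracket x y := (0, 0, x.1 ⬝ᵥ y.2.1 - y.1 ⬝ᵥ x.2.1)
  add_lie x y z := by
    refine Prod.ext ?_ (Prod.ext ?_ ?_)
    · show (0 : Fin m → F) = 0 + 0; rw [add_zero]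
    · show (0 : Fin m → F) = 0 + 0; rw [add_zero]
    · show (x.1 + y.1) ⬝ᵥ z.2.1 - z.1 ⬝ᵥ (x.2.1 + y.2.1) =
        (x.1 ⬝ᵥ z.2.1 - z.1 ⬝ᵥ x.2.1) + (y.1 ⬝ᵥ z.2.1 - z.1 ⬝ᵥ y.2.1)
      rw [add_dotProduct, dotProduct_add]; ring
  lie_add x y z := by
    refine Prod.ext ?_ (Prod.ext ?_ ?_)
    · show (0 : Fin m → F) = 0 + 0; rw [add_zero]
    · show (0 : Fin m → F) = 0 + 0; rw [add_zero]
    · show x.1 ⬝ᵥ (y.2.1 + z.2.1) - (y.1 + z.1) ⬝ᵥ x.2.1 =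
        (x.1 ⬝ᵥ y.2.1 - y.1 ⬝ᵥ x.2.1) + (x.1 ⬝ᵥ z.2.1 - z.1 ⬝ᵥ x.2.1)
      rw [add_dotProduct, dotProduct_add]; ring
  lie_self x := by
    refine Prod.ext rfl (Prod.ext rfl ?_)
    show x.1 ⬝ᵥ x.2.1 - x.1 ⬝ᵥ x.2.1 = 0
    ring
  leibniz_lie x y z := by
    refine Prod.ext ?_ (Prod.ext ?_ ?_)
    · show (0 : Fin m → F) = 0 + 0; rw [add_zero]
    · show (0 : Fin m → F) = 0 + 0; rw [add_zero]
    · show x.1 ⬝ᵥ (0 : Fin m → F) - (0 : Fin m → F) ⬝ᵥ x.2.1 =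
        ((0 : Fin m → F) ⬝ᵥ z.2.1 - z.1 ⬝ᵥ (0 : Fin m → F)) +
          (y.1 ⬝ᵥ (0 : Fin m → F) - (0 : Fin m → F) ⬝ᵥ y.2.1)
      simp

instance (m : ℕ) : LieAlgebra F (Heis F m) where
  lie_smul t x y := by
    refine Prod.ext ?_ (Prod.ext ?_ ?_)
    · show (0 : Fin m → F) = t • 0; rw [smul_zero]
    · show (0 : Fin m → F) = t • 0; rw [smul_zero]
    · show x.1 ⬝ᵥ (t • y.2.1) - (t • y.1) ⬝ᵥ x.2.1 = t • (x.1 ⬝ᵥ y.2.1 - y.1 ⬝ᵥ x.2.1)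
      rw [dotProduct_smul, smul_dotProduct, smul_sub]

instance (m : ℕ) : FiniteDimensional F (Heis F m) :=
  (inferInstance : FiniteDimensional F ((Fin m → F) × (Fin m → F) × F))
end Heis
open LieAlgebra

universe u v

section Functors
variable (F : Type u) [Field F] (L : Type v) [LieRing L] [LieAlgebra F L]

/-- The canonical free presentation `FreeLieAlgebra F L → L`. -/
noncomputable def presHom : FreeLieAlgebra F L →ₗ⁅F⁆ L := FreeLieAlgebra.lift F id

/-- The relation ideal `R` of the canonical free presentation. -/
noncomputable def presKer : LieIdeal F (FreeLieAlgebra F L) := (presHom F L).ker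

/-- The Schur multiplier `M(L) = (R ∩ F²)/[R,F]` of a Lie algebra. -/
noncomputable abbrev Multiplier : Type (max u v) :=
  ↥((presKer F L ⊓ derivedSeries F (FreeLieAlgebra F L) 1).toSubmodule) ⧸
    (Submodule.comap
      ((presKer F L ⊓ derivedSeries F (FreeLieAlgebra F L) 1).toSubmodule).subtype
      (⁅presKer F L, (⊤ : LieIdeal F (FreeLieAlgebra F L))⁆ : LieIdeal F (FreeLieAlgebra F L)).toSubmodule)


/-- Relations defining the nonabelian tensor square. -/
def tensorRel : Set (FreeLieAlgebra F (L × L)) :=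
  letI e : L × L → FreeLieAlgebra F (L × L) := FreeLieAlgebra.of F
  { x | (∃ (c : F) (a b : L), x = e (c • a, b) - c • e (a, b)) ∨
        (∃ (c : F) (a b : L), x = e (a, c • b) - c • e (a, b)) ∨
        (∃ a a' b : L, x = e (a + a', b) - e (a, b) - e (a', b)) ∨
        (∃ a b b' : L, x = e (a, b + b') - e (a, b) - e (a, b')) ∨
        (∃ a a' b : L, x = e (⁅a, a'⁆, b) - e (a, ⁅a', b⁆) + e (a', ⁅a, b⁆)) ∨
        (∃ a b b' : L, x = e (a, ⁅b, b'⁆) - e (⁅b', a⁆, b) + e (⁅b, a⁆, b')) ∨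
        (∃ a b a' b' : L, x = ⁅e (a, b), e (a', b')⁆ + e (⁅b, a⁆, ⁅a', b'⁆)) }

/-- The nonabelian tensor square `L ⊗ L`. -/
abbrev NTensor : Type (max u v) :=
  FreeLieAlgebra F (L × L) ⧸ LieSubmodule.lieSpan F (FreeLieAlgebra F (L × L)) (tensorRel F L)


/-- The generator `a ⊗ b` of the nonabelian tensor square. -/
noncomputable def tmk (a b : L) : NTensor F L :=
  LieSubmodule.Quotient.mk (N := LieSubmodule.lieSpan F (FreeLieAlgebra F (L × L)) (tensorRel F L))
    (FreeLieAlgebra.of F (a, b))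

/-- The square `L □ L`, i.e. the subalgebra of `L ⊗ L` generated by the elements `a ⊗ a`. -/
noncomputable def SqSub : LieSubalgebra F (NTensor F L) :=
  LieSubalgebra.lieSpan F _ { x | ∃ a : L, x = tmk F L a a }

/-- The ideal of `L ⊗ L` generated by the elements `a ⊗ a`. -/
noncomputable def sqIdeal : LieIdeal F (NTensor F L) :=
  LieSubmodule.lieSpan F _ { x | ∃ a : L, x = tmk F L a a }

/-- The exterior square `L ∧ L`. -/
noncomputable abbrev ExtSq : Type (max u v) := NTensor F L ⧸ sqIdeal F L


/-- The generator `a ∧ b` of the exterior square. -/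
noncomputable def wmk (a b : L) : ExtSq F L :=
  LieSubmodule.Quotient.mk (N := sqIdeal F L) (tmk F L a b)

/-- The exterior center `Z^∧(L)`. -/
noncomputable def extCenter : Set L := { x : L | ∀ l : L, wmk F L x l = 0 }

/-- A Lie algebra is capable if it is isomorphic to `H/Z(H)` for some Lie algebra `H`. -/
def Capable : Prop :=
  ∃ (H : Type (max u v)) (_ : LieRing H) (_ : LieAlgebra F H),
    Nonempty ((H ⧸ LieAlgebra.center F H) ≃ₗ⁅F⁆ L)

/-- The corank `t(L)` of an `n`-dimensional nilpotent Lie algebra. -/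
noncomputable def corank : ℕ :=
  Module.finrank F L * (Module.finrank F L - 1) / 2 - Module.finrank F (Multiplier F L)

/-- The abelianization of `L` (as an `F`-module). -/
noncomputable abbrev AbQuot : Type v := L ⧸ derivedSeries F L 1

end Functors

section SESAux
universe w
variable {F : Type u} [Field F]

/-- Lift of a Lie algebra morphism to a quotient by an ideal contained in the kernel. -/
noncomputable def lieQuotLift {K : Type w} [LieRing K] [LieAlgebra F K]
    {M : Type*} [LieRing M] [LieAlgebra F M]
    (I : LieIdeal F K) (f : K →ₗ⁅F⁆ M) (h : ∀ x ∈ I, f x = 0) : (K ⧸ I) →ₗ⁅F⁆ M :=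
  { Submodule.liftQ I.toSubmodule f.toLinearMap (fun x hx => h x hx) with
    map_lie' := by
      intro x y
      refine Quotient.inductionOn₂' x y fun x y => ?_
      rw [LieSubmodule.Quotient.is_quotient_mk, LieSubmodule.Quotient.is_quotient_mk,
        ← LieSubmodule.Quotient.mk_bracket]
      show Submodule.liftQ I.toSubmodule f.toLinearMap _ (Submodule.Quotient.mk ⁅x, y⁆) =
        ⁅Submodule.liftQ I.toSubmodule f.toLinearMap _ (Submodule.Quotient.mk x),
         Submodule.liftQ I.toSubmodule f.toLinearMap _ (Submodule.Quotient.mk y)⁆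
      exact f.map_lie x y }

@[simp] theorem lieQuotLift_mk {K : Type w} [LieRing K] [LieAlgebra F K]
    {M : Type*} [LieRing M] [LieAlgebra F M]
    (I : LieIdeal F K) (f : K →ₗ⁅F⁆ M) (h : ∀ x ∈ I, f x = 0) (x : K) :
    lieQuotLift I f h (LieSubmodule.Quotient.mk (N := I) x) = f x := rfl

/-- Quotient map by a Lie ideal, as a morphism of Lie algebras. -/
def lieQuotMk {K : Type w} [LieRing K] [LieAlgebra F K] (I : LieIdeal F K) :
    K →ₗ⁅F⁆ K ⧸ I :=
  { I.toSubmodule.mkQ with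
    map_lie' := by intro x y; rfl }

@[simp] theorem lieQuotMk_apply {K : Type w} [LieRing K] [LieAlgebra F K] (I : LieIdeal F K)
    (x : K) : lieQuotMk I x = LieSubmodule.Quotient.mk (N := I) x := rfl

end SESAux

section SES
variable (F : Type u) [Field F] (L : Type u) [LieRing L] [LieAlgebra F L]

local notation "T" => FreeLieAlgebra F (L × L)
local notation "Irel" => LieSubmodule.lieSpan F (FreeLieAlgebra F (L × L)) (tensorRel F L)

theorem tensorRel_mk_eq_zero {x : FreeLieAlgebra F (L × L)} (hx : x ∈ tensorRel F L) :
    (LieSubmodule.Quotient.mk (N := Irel) x : NTensor F L) = 0 :=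
  LieSubmodule.Quotient.mk_eq_zero'.mpr (LieSubmodule.subset_lieSpan hx)

private theorem tmk_sub_eq {x y : FreeLieAlgebra F (L × L)}
    (h : x - y ∈ tensorRel F L) :
    (LieSubmodule.Quotient.mk (N := Irel) x : NTensor F L) =
      LieSubmodule.Quotient.mk (N := Irel) y :=
  sub_eq_zero.mp (by
    rw [← Submodule.Quotient.mk_sub]
    exact tensorRel_mk_eq_zero F L h)

theorem tmk_smul_left (c : F) (a b : L) : tmk F L (c • a) b = c • tmk F L a b := by
  show LieSubmodule.Quotient.mk (N := Irel) _ = c • LieSubmodule.Quotient.mk (N := Irel) _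
  rw [← Submodule.Quotient.mk_smul]
  exact tmk_sub_eq F L (Or.inl ⟨c, a, b, rfl⟩)

theorem tmk_smul_right (c : F) (a b : L) : tmk F L a (c • b) = c • tmk F L a b := by
  show LieSubmodule.Quotient.mk (N := Irel) _ = c • LieSubmodule.Quotient.mk (N := Irel) _
  rw [← Submodule.Quotient.mk_smul]
  exact tmk_sub_eq F L (Or.inr (Or.inl ⟨c, a, b, rfl⟩))

theorem tmk_add_left (a a' b : L) : tmk F L (a + a') b = tmk F L a b + tmk F L a' b := by
  show LieSubmodule.Quotient.mk (N := Irel) _ =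
    LieSubmodule.Quotient.mk (N := Irel) _ + LieSubmodule.Quotient.mk (N := Irel) _
  rw [← Submodule.Quotient.mk_add]
  exact tmk_sub_eq F L (Or.inr (Or.inr (Or.inl ⟨a, a', b, by abel⟩)))

theorem tmk_add_right (a b b' : L) : tmk F L a (b + b') = tmk F L a b + tmk F L a b' := by
  show LieSubmodule.Quotient.mk (N := Irel) _ =
    LieSubmodule.Quotient.mk (N := Irel) _ + LieSubmodule.Quotient.mk (N := Irel) _
  rw [← Submodule.Quotient.mk_add]
  exact tmk_sub_eq F L (Or.inr (Or.inr (Or.inr (Or.inl ⟨a, b, b', by abel⟩))))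

theorem tmk_rel5 (a a' b : L) :
    tmk F L ⁅a, a'⁆ b = tmk F L a ⁅a', b⁆ - tmk F L a' ⁅a, b⁆ := by
  show LieSubmodule.Quotient.mk (N := Irel) _ =
    LieSubmodule.Quotient.mk (N := Irel) _ - LieSubmodule.Quotient.mk (N := Irel) _
  rw [← Submodule.Quotient.mk_sub]
  exact tmk_sub_eq F L (Or.inr (Or.inr (Or.inr (Or.inr (Or.inl ⟨a, a', b, by abel⟩)))))

theorem tmk_rel6 (a b b' : L) :
    tmk F L a ⁅b, b'⁆ = tmk F L ⁅b', a⁆ b - tmk F L ⁅b, a⁆ b' := by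
  show LieSubmodule.Quotient.mk (N := Irel) _ =
    LieSubmodule.Quotient.mk (N := Irel) _ - LieSubmodule.Quotient.mk (N := Irel) _
  rw [← Submodule.Quotient.mk_sub]
  exact tmk_sub_eq F L (Or.inr (Or.inr (Or.inr (Or.inr (Or.inr (Or.inl ⟨a, b, b', by abel⟩))))))

theorem tmk_rel7 (a b a' b' : L) :
    ⁅tmk F L a b, tmk F L a' b'⁆ = -tmk F L ⁅b, a⁆ ⁅a', b'⁆ := by
  show ⁅LieSubmodule.Quotient.mk (N := Irel) _, LieSubmodule.Quotient.mk (N := Irel) _⁆ =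
    -LieSubmodule.Quotient.mk (N := Irel) _
  rw [← LieSubmodule.Quotient.mk_bracket, ← Submodule.Quotient.mk_neg]
  exact tmk_sub_eq F L
    (Or.inr (Or.inr (Or.inr (Or.inr (Or.inr (Or.inr ⟨a, b, a', b', by abel⟩))))))

theorem tmk_zero_left (b : L) : tmk F L 0 b = 0 := by
  have := tmk_smul_left F L 0 0 b
  simpa using this

theorem tmk_zero_right (a : L) : tmk F L a 0 = 0 := by
  have := tmk_smul_right F L 0 a 0
  simpa using this

theorem tmk_neg_left (a b : L) : tmk F L (-a) b = -tmk F L a b := by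
  have := tmk_smul_left F L (-1) a b
  simpa using this

theorem tmk_bracket (a b a' b' : L) :
    ⁅tmk F L a b, tmk F L a' b'⁆ = tmk F L ⁅a, b⁆ ⁅a', b'⁆ := by
  rw [tmk_rel7, ← lie_skew a b, tmk_neg_left]

private theorem sqmk_smul (c : F) (x : NTensor F L) :
    (LieSubmodule.Quotient.mk (N := sqIdeal F L) (c • x) : ExtSq F L) =
      c • LieSubmodule.Quotient.mk (N := sqIdeal F L) x :=
  rfl

private theorem sqmk_add (x y : NTensor F L) :
    (LieSubmodule.Quotient.mk (N := sqIdeal F L) (x + y) : ExtSq F L) =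
      LieSubmodule.Quotient.mk (N := sqIdeal F L) x +
        LieSubmodule.Quotient.mk (N := sqIdeal F L) y :=
  rfl

private theorem sqmk_neg (x : NTensor F L) :
    (LieSubmodule.Quotient.mk (N := sqIdeal F L) (-x) : ExtSq F L) =
      -LieSubmodule.Quotient.mk (N := sqIdeal F L) x :=
  rfl

private theorem sqmk_sub (x y : NTensor F L) :
    (LieSubmodule.Quotient.mk (N := sqIdeal F L) (x - y) : ExtSq F L) =
      LieSubmodule.Quotient.mk (N := sqIdeal F L) x -
        LieSubmodule.Quotient.mk (N := sqIdeal F L) y :=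
  rfl

theorem sq_tmk_mk_eq_zero {x : NTensor F L} (hx : ∃ a : L, x = tmk F L a a) :
    (LieSubmodule.Quotient.mk (N := sqIdeal F L) x : ExtSq F L) = 0 :=
  LieSubmodule.Quotient.mk_eq_zero'.mpr (LieSubmodule.subset_lieSpan hx)

theorem wmk_eq (a b : L) :
    wmk F L a b = LieSubmodule.Quotient.mk (N := sqIdeal F L) (tmk F L a b) := rfl

theorem wmk_smul_left (c : F) (a b : L) : wmk F L (c • a) b = c • wmk F L a b := by
  rw [wmk_eq, wmk_eq, tmk_smul_left, sqmk_smul]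

theorem wmk_smul_right (c : F) (a b : L) : wmk F L a (c • b) = c • wmk F L a b := by
  rw [wmk_eq, wmk_eq, tmk_smul_right, sqmk_smul]

theorem wmk_add_left (a a' b : L) : wmk F L (a + a') b = wmk F L a b + wmk F L a' b := by
  rw [wmk_eq, wmk_eq, wmk_eq, tmk_add_left, sqmk_add]

theorem wmk_add_right (a b b' : L) : wmk F L a (b + b') = wmk F L a b + wmk F L a b' := by
  rw [wmk_eq, wmk_eq, wmk_eq, tmk_add_right, sqmk_add]

theorem wmk_zero_left (b : L) : wmk F L 0 b = 0 := by
  rw [wmk_eq, tmk_zero_left]; rfl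

theorem wmk_zero_right (a : L) : wmk F L a 0 = 0 := by
  rw [wmk_eq, tmk_zero_right]; rfl

theorem wmk_neg_left (a b : L) : wmk F L (-a) b = -wmk F L a b := by
  rw [wmk_eq, wmk_eq, tmk_neg_left, sqmk_neg]

theorem wmk_self (a : L) : wmk F L a a = 0 :=
  sq_tmk_mk_eq_zero F L ⟨a, rfl⟩

theorem wmk_antisymm (a b : L) : wmk F L a b = -wmk F L b a := by
  have h := wmk_self F L (a + b)
  rw [wmk_add_left, wmk_add_right, wmk_add_right, wmk_self, wmk_self] at h
  have h2 : wmk F L a b + wmk F L b a = 0 := by simpa using h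
  exact eq_neg_of_add_eq_zero_left h2

theorem wmk_bracket (a b a' b' : L) :
    ⁅wmk F L a b, wmk F L a' b'⁆ = wmk F L ⁅a, b⁆ ⁅a', b'⁆ := by
  rw [wmk_eq, wmk_eq, wmk_eq, ← LieSubmodule.Quotient.mk_bracket, tmk_bracket]

theorem wmk_rel6 (a b b' : L) :
    wmk F L a ⁅b, b'⁆ = wmk F L ⁅b', a⁆ b - wmk F L ⁅b, a⁆ b' := by
  rw [wmk_eq, wmk_eq, wmk_eq, tmk_rel6, sqmk_sub]

theorem wmk_rel5 (a a' b : L) :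
    wmk F L ⁅a, a'⁆ b = wmk F L a ⁅a', b⁆ - wmk F L a' ⁅a, b⁆ := by
  rw [wmk_eq, wmk_eq, wmk_eq, tmk_rel5, sqmk_sub]

theorem wmk_leibniz (a b c : L) :
    wmk F L a ⁅b, c⁆ = wmk F L ⁅a, b⁆ c + wmk F L b ⁅a, c⁆ := by
  rw [wmk_rel6 F L a b c, ← lie_skew c a, ← lie_skew b a, wmk_neg_left, wmk_neg_left,
    wmk_antisymm F L ⁅a, c⁆ b]
  abel

/-- The commutator lift on the free Lie algebra. -/
noncomputable def kappa0 : FreeLieAlgebra F (L × L) →ₗ⁅F⁆ L :=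
  FreeLieAlgebra.lift F (fun p => ⁅p.1, p.2⁆)

theorem kappa0_of (p : L × L) : kappa0 F L (FreeLieAlgebra.of F p) = ⁅p.1, p.2⁆ :=
  FreeLieAlgebra.lift_of_apply _ p

theorem lie_rel6 (a b b' : L) :
    (⁅a, ⁅b, b'⁆⁆ : L) - ⁅⁅b', a⁆, b⁆ + ⁅⁅b, a⁆, b'⁆ = 0 := by
  have h1 : (⁅⁅b', a⁆, b⁆ : L) = ⁅b, ⁅a, b'⁆⁆ := by
    rw [← lie_skew b' a, neg_lie, ← lie_skew b ⁅a, b'⁆]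
  have h2 : (⁅⁅b, a⁆, b'⁆ : L) = -⁅⁅a, b⁆, b'⁆ := by rw [← lie_skew b a, neg_lie]
  rw [h1, h2, leibniz_lie a b b']
  abel

theorem kappa0_rel : ∀ x ∈ tensorRel F L, kappa0 F L x = 0 := by
  rintro x hx
  rcases hx with ⟨c,a,b,rfl⟩|⟨c,a,b,rfl⟩|⟨a,a',b,rfl⟩|⟨a,b,b',rfl⟩|⟨a,a',b,rfl⟩|⟨a,b,b',rfl⟩|
    ⟨a,b,a',b',rfl⟩
  · simp [kappa0_of, smul_lie]
  · simp [kappa0_of, lie_smul]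
  · simp [kappa0_of, add_lie]
  · simp [kappa0_of, lie_add]
  · simp only [_root_.map_sub, _root_.map_add, kappa0_of]
    rw [lie_lie]
    abel
  · simp only [_root_.map_sub, _root_.map_add, kappa0_of]
    exact lie_rel6 (L := L) a b b'
  · simp only [_root_.map_add, LieHom.map_lie, kappa0_of]
    rw [← lie_skew b a, neg_lie]
    abel

theorem kappa0_span_rel : ∀ x ∈ Irel, kappa0 F L x = 0 := by
  intro x hx
  have h : Irel ≤ (kappa0 F L).ker := by
    rw [LieSubmodule.lieSpan_le]
    intro y hy
    exact LieHom.mem_ker.mpr (kappa0_rel F L y hy)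
  exact LieHom.mem_ker.mp (h hx)

/-- The commutator map on the nonabelian tensor square. -/
noncomputable def kappa1 : NTensor F L →ₗ⁅F⁆ L :=
  lieQuotLift Irel (kappa0 F L) (kappa0_span_rel F L)

theorem kappa1_tmk (a b : L) : kappa1 F L (tmk F L a b) = ⁅a, b⁆ := by
  show kappa1 F L (LieSubmodule.Quotient.mk (N := Irel) (FreeLieAlgebra.of F (a, b))) = _
  rw [kappa1, lieQuotLift_mk, kappa0_of]

theorem kappa1_sq : ∀ x ∈ sqIdeal F L, kappa1 F L x = 0 := by
  intro x hx
  have h : sqIdeal F L ≤ (kappa1 F L).ker := by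
    rw [sqIdeal, LieSubmodule.lieSpan_le]
    rintro y ⟨a, rfl⟩
    exact LieHom.mem_ker.mpr (by rw [kappa1_tmk, lie_self])
  exact LieHom.mem_ker.mp (h hx)

/-- The commutator map on the exterior square. -/
noncomputable def kappa : ExtSq F L →ₗ⁅F⁆ L :=
  lieQuotLift (sqIdeal F L) (kappa1 F L) (kappa1_sq F L)

theorem kappa_wmk (a b : L) : kappa F L (wmk F L a b) = ⁅a, b⁆ := by
  rw [wmk_eq, kappa, lieQuotLift_mk, kappa1_tmk]

/-- The exterior square is spanned by the wedges. -/
noncomputable def wmkSpan : LieSubalgebra F (ExtSq F L) :=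
  { Submodule.span F {x : ExtSq F L | ∃ a b : L, x = wmk F L a b} with
    lie_mem' := by
      intro x y hx hy
      set S : Set (ExtSq F L) := {x | ∃ a b : L, x = wmk F L a b} with hS
      have hx' : x ∈ Submodule.span F S := hx
      have hy' : y ∈ Submodule.span F S := hy
      show ⁅x, y⁆ ∈ Submodule.span F S
      clear hx hy
      have key : ∀ a b : L, ∀ y ∈ Submodule.span F S, ⁅wmk F L a b, y⁆ ∈ Submodule.span F S := by
        intro a b y hy
        refine Submodule.span_induction ?_ ?_ ?_ ?_ hy
        · rintro z ⟨c, d, rfl⟩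
          exact Submodule.subset_span ⟨⁅a, b⁆, ⁅c, d⁆, wmk_bracket F L a b c d⟩
        · simp
        · intro u v _ _ hu hv; rw [lie_add]; exact add_mem hu hv
        · intro c u _ hu; rw [lie_smul]; exact Submodule.smul_mem _ c hu
      refine Submodule.span_induction ?_ ?_ ?_ ?_ hx'
      · rintro z ⟨a, b, rfl⟩; exact key a b y hy' 
      · simp
      · intro u v _ _ hu hv; rw [add_lie]; exact add_mem hu hv
      · intro c u _ hu; rw [smul_lie]; exact Submodule.smul_mem _ c hu }

theorem mem_wmkSpan (a b : L) : wmk F L a b ∈ wmkSpan F L :=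
  Submodule.subset_span ⟨a, b, rfl⟩

/-- The double quotient map onto the exterior square, as a morphism of Lie algebras. -/
noncomputable def extSqMk : FreeLieAlgebra F (L × L) →ₗ⁅F⁆ ExtSq F L :=
  (lieQuotMk (sqIdeal F L)).comp (lieQuotMk Irel)

theorem extSqMk_of (p : L × L) : extSqMk F L (FreeLieAlgebra.of F p) = wmk F L p.1 p.2 := rfl

theorem extSqMk_surjective : Function.Surjective (extSqMk F L) := by
  intro x
  obtain ⟨y, rfl⟩ := LieSubmodule.Quotient.surjective_mk' (sqIdeal F L) x
  obtain ⟨z, rfl⟩ := LieSubmodule.Quotient.surjective_mk' Irel y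
  exact ⟨z, rfl⟩

theorem extsq_span_top :
    Submodule.span F {x : ExtSq F L | ∃ a b : L, x = wmk F L a b} = ⊤ := by
  rw [eq_top_iff]
  rintro x -
  obtain ⟨t, rfl⟩ := extSqMk_surjective F L x
  let ξ : FreeLieAlgebra F (L × L) →ₗ⁅F⁆ ↥(wmkSpan F L) :=
    FreeLieAlgebra.lift F (fun p => ⟨wmk F L p.1 p.2, mem_wmkSpan F L p.1 p.2⟩)
  have hcomm : (wmkSpan F L).incl.comp ξ = extSqMk F L := by
    apply FreeLieAlgebra.hom_ext
    intro p
    show ((ξ (FreeLieAlgebra.of F p) : ↥(wmkSpan F L)) : ExtSq F L) = wmk F L p.1 p.2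
    rw [show ξ (FreeLieAlgebra.of F p) = ⟨wmk F L p.1 p.2, mem_wmkSpan F L p.1 p.2⟩ from
      FreeLieAlgebra.lift_of_apply _ p]
  have : extSqMk F L t = ((ξ t : ↥(wmkSpan F L)) : ExtSq F L) := by
    rw [← hcomm]; rfl
  rw [this]
  exact (ξ t).2

theorem extsq_ext {M : Type*} [AddCommGroup M] [Module F M]
    {f g : ExtSq F L →ₗ[F] M} (h : ∀ a b : L, f (wmk F L a b) = g (wmk F L a b)) : f = g := by
  apply LinearMap.ext_on (extsq_span_top F L)
  rintro x ⟨a, b, rfl⟩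
  exact h a b

theorem presHom_of (l : L) : presHom F L (FreeLieAlgebra.of F l) = l :=
  FreeLieAlgebra.lift_of_apply _ l

theorem mem_presKer_iff {x : FreeLieAlgebra F L} : x ∈ presKer F L ↔ presHom F L x = 0 :=
  LieHom.mem_ker

theorem derived_one_eq : derivedSeries F (FreeLieAlgebra F L) 1 =
    ⁅(⊤ : LieIdeal F (FreeLieAlgebra F L)), (⊤ : LieIdeal F (FreeLieAlgebra F L))⁆ := by
  rw [LieAlgebra.derivedSeries_def, LieAlgebra.derivedSeriesOfIdeal_succ,
    LieAlgebra.derivedSeriesOfIdeal_zero]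

theorem lie_mem_derived (x y : FreeLieAlgebra F L) :
    ⁅x, y⁆ ∈ derivedSeries F (FreeLieAlgebra F L) 1 := by
  rw [derived_one_eq]
  exact LieSubmodule.lie_mem_lie (LieSubmodule.mem_top x) (LieSubmodule.mem_top y)

local notation "Jideal" =>
  (⁅presKer F L, (⊤ : LieIdeal F (FreeLieAlgebra F L))⁆ : LieIdeal F (FreeLieAlgebra F L))

theorem mem_J_left {x : FreeLieAlgebra F L} (y : FreeLieAlgebra F L)
    (hx : presHom F L x = 0) : ⁅x, y⁆ ∈ Jideal :=
  LieSubmodule.lie_mem_lie (mem_presKer_iff F L |>.mpr hx) (LieSubmodule.mem_top y)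

theorem mem_J_right (x : FreeLieAlgebra F L) {y : FreeLieAlgebra F L}
    (hy : presHom F L y = 0) : ⁅x, y⁆ ∈ Jideal := by
  rw [← lie_skew x y]
  exact neg_mem (mem_J_left F L x hy)

theorem J_le_R : Jideal ≤ presKer F L := LieSubmodule.lie_le_left _ _

theorem J_le_D : Jideal ≤ derivedSeries F (FreeLieAlgebra F L) 1 := by
  rw [derived_one_eq]
  exact LieSubmodule.mono_lie le_top le_top

/-- `[R,F]` as an ideal of `F² = derivedSeries 1`. -/
noncomputable def Jsub : LieIdeal F ↥(derivedSeries F (FreeLieAlgebra F L) 1) where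
  carrier := {x : ↥(derivedSeries F (FreeLieAlgebra F L) 1) | (x : FreeLieAlgebra F L) ∈ Jideal}
  add_mem' := fun {a b} ha hb => by
    show ((a + b : ↥(derivedSeries F (FreeLieAlgebra F L) 1)) : FreeLieAlgebra F L) ∈ Jideal
    exact add_mem ha hb
  zero_mem' := by
    show ((0 : ↥(derivedSeries F (FreeLieAlgebra F L) 1)) : FreeLieAlgebra F L) ∈ Jideal
    exact zero_mem _
  smul_mem' := fun c a ha => by
    show ((c • a : ↥(derivedSeries F (FreeLieAlgebra F L) 1)) : FreeLieAlgebra F L) ∈ Jideal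
    exact Submodule.smul_mem _ c ha
  lie_mem := fun {x m} hm => by
    show ((⁅x, m⁆ : ↥(derivedSeries F (FreeLieAlgebra F L) 1)) : FreeLieAlgebra F L) ∈ Jideal
    exact (Jideal).lie_mem hm

theorem mem_Jsub {x : ↥(derivedSeries F (FreeLieAlgebra F L) 1)} :
    x ∈ Jsub F L ↔ (x : FreeLieAlgebra F L) ∈ Jideal := Iff.rfl

/-- `F²/[R,F]`. -/
noncomputable abbrev Wq : Type u := ↥(derivedSeries F (FreeLieAlgebra F L) 1) ⧸ Jsub F L

/-- The bracket `⁅x, y⁆` as an element of `F²`. -/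
noncomputable def sD (x y : FreeLieAlgebra F L) : ↥(derivedSeries F (FreeLieAlgebra F L) 1) :=
  ⟨⁅x, y⁆, lie_mem_derived F L x y⟩

/-- The class of `⁅x, y⁆` in `F²/[R,F]`. -/
noncomputable def toW (x y : FreeLieAlgebra F L) : Wq F L :=
  LieSubmodule.Quotient.mk (N := Jsub F L) (sD F L x y)

theorem toW_eq_mkQ (x y : FreeLieAlgebra F L) :
    toW F L x y = (Jsub F L).toSubmodule.mkQ (sD F L x y) := rfl

private theorem Wmk_add (u v : ↥(derivedSeries F (FreeLieAlgebra F L) 1)) :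
    (LieSubmodule.Quotient.mk (N := Jsub F L) (u + v) : Wq F L) =
      LieSubmodule.Quotient.mk (N := Jsub F L) u + LieSubmodule.Quotient.mk (N := Jsub F L) v :=
  rfl

private theorem Wmk_sub (u v : ↥(derivedSeries F (FreeLieAlgebra F L) 1)) :
    (LieSubmodule.Quotient.mk (N := Jsub F L) (u - v) : Wq F L) =
      LieSubmodule.Quotient.mk (N := Jsub F L) u - LieSubmodule.Quotient.mk (N := Jsub F L) v :=
  rfl

private theorem Wmk_smul (c : F) (u : ↥(derivedSeries F (FreeLieAlgebra F L) 1)) :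
    (LieSubmodule.Quotient.mk (N := Jsub F L) (c • u) : Wq F L) =
      c • LieSubmodule.Quotient.mk (N := Jsub F L) u :=
  rfl

private theorem Wmk_zero :
    (LieSubmodule.Quotient.mk (N := Jsub F L) 0 : Wq F L) = 0 :=
  rfl

theorem toW_zero_left {x : FreeLieAlgebra F L} (h : presHom F L x = 0)
    (y : FreeLieAlgebra F L) : toW F L x y = 0 :=
  LieSubmodule.Quotient.mk_eq_zero'.mpr (mem_J_left F L y h)

theorem toW_zero_right (x : FreeLieAlgebra F L) {y : FreeLieAlgebra F L}
    (h : presHom F L y = 0) : toW F L x y = 0 :=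
  LieSubmodule.Quotient.mk_eq_zero'.mpr (mem_J_right F L x h)

theorem toW_add_left (x x' y : FreeLieAlgebra F L) :
    toW F L (x + x') y = toW F L x y + toW F L x' y := by
  have h : sD F L (x + x') y = sD F L x y + sD F L x' y := Subtype.ext (add_lie _ _ _)
  show LieSubmodule.Quotient.mk (N := Jsub F L) _ = _
  rw [h, Wmk_add]
  rfl

theorem toW_sub_left (x x' y : FreeLieAlgebra F L) :
    toW F L (x - x') y = toW F L x y - toW F L x' y := by
  have h : sD F L (x - x') y = sD F L x y - sD F L x' y := Subtype.ext (sub_lie _ _ _)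
  show LieSubmodule.Quotient.mk (N := Jsub F L) _ = _
  rw [h, Wmk_sub]
  rfl

theorem toW_smul_left (c : F) (x y : FreeLieAlgebra F L) :
    toW F L (c • x) y = c • toW F L x y := by
  have h : sD F L (c • x) y = c • sD F L x y := Subtype.ext (smul_lie _ _ _)
  show LieSubmodule.Quotient.mk (N := Jsub F L) _ = _
  rw [h, Wmk_smul]
  rfl

theorem toW_sub_right (x y y' : FreeLieAlgebra F L) :
    toW F L x (y - y') = toW F L x y - toW F L x y' := by
  have h : sD F L x (y - y') = sD F L x y - sD F L x y' := Subtype.ext (lie_sub _ _ _)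
  show LieSubmodule.Quotient.mk (N := Jsub F L) _ = _
  rw [h, Wmk_sub]
  rfl

theorem toW_smul_right (c : F) (x y : FreeLieAlgebra F L) :
    toW F L x (c • y) = c • toW F L x y := by
  have h : sD F L x (c • y) = c • sD F L x y := Subtype.ext (by
    show (⁅x, c • y⁆ : FreeLieAlgebra F L) = c • ⁅x, y⁆
    exact lie_smul c x y)
  show LieSubmodule.Quotient.mk (N := Jsub F L) _ = _
  rw [h, Wmk_smul]
  rfl

theorem toW_congr_left {x x' : FreeLieAlgebra F L} (y : FreeLieAlgebra F L)
    (h : presHom F L (x - x') = 0) : toW F L x y = toW F L x' y := by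
  have := toW_sub_left F L x x' y
  rw [toW_zero_left F L h y] at this
  exact (sub_eq_zero.mp this.symm)

theorem toW_congr_right (x : FreeLieAlgebra F L) {y y' : FreeLieAlgebra F L}
    (h : presHom F L (y - y') = 0) : toW F L x y = toW F L x y' := by
  have := toW_sub_right F L x y y'
  rw [toW_zero_right F L x h] at this
  exact (sub_eq_zero.mp this.symm)

theorem toW_bracket (x y x' y' : FreeLieAlgebra F L) :
    ⁅toW F L x y, toW F L x' y'⁆ = toW F L ⁅x, y⁆ ⁅x', y'⁆ := by
  show ⁅LieSubmodule.Quotient.mk (N := Jsub F L) _, LieSubmodule.Quotient.mk (N := Jsub F L) _⁆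
    = LieSubmodule.Quotient.mk (N := Jsub F L) _
  rw [← LieSubmodule.Quotient.mk_bracket]
  congr 1

theorem toW_jacobi (x y z : FreeLieAlgebra F L) :
    toW F L ⁅x, y⁆ z - toW F L x ⁅y, z⁆ + toW F L y ⁅x, z⁆ = 0 := by
  have h : sD F L ⁅x, y⁆ z - sD F L x ⁅y, z⁆ + sD F L y ⁅x, z⁆ = 0 := by
    apply Subtype.ext
    show (⁅⁅x, y⁆, z⁆ : FreeLieAlgebra F L) - ⁅x, ⁅y, z⁆⁆ + ⁅y, ⁅x, z⁆⁆ = 0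
    rw [lie_lie]
    abel
  show LieSubmodule.Quotient.mk (N := Jsub F L) _ - LieSubmodule.Quotient.mk (N := Jsub F L) _ +
    LieSubmodule.Quotient.mk (N := Jsub F L) _ = 0
  rw [← Wmk_sub, ← Wmk_add, h, Wmk_zero]

theorem toW_rel6 (x y y' : FreeLieAlgebra F L) :
    toW F L x ⁅y, y'⁆ - toW F L ⁅y', x⁆ y + toW F L ⁅y, x⁆ y' = 0 := by
  have h : sD F L x ⁅y, y'⁆ - sD F L ⁅y', x⁆ y + sD F L ⁅y, x⁆ y' = 0 := by
    apply Subtype.ext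
    show (⁅x, ⁅y, y'⁆⁆ : FreeLieAlgebra F L) - ⁅⁅y', x⁆, y⁆ + ⁅⁅y, x⁆, y'⁆ = 0
    exact lie_rel6 (L := FreeLieAlgebra F L) x y y'
  show LieSubmodule.Quotient.mk (N := Jsub F L) _ - LieSubmodule.Quotient.mk (N := Jsub F L) _ +
    LieSubmodule.Quotient.mk (N := Jsub F L) _ = 0
  rw [← Wmk_sub, ← Wmk_add, h, Wmk_zero]

theorem presHom_s_sub (l l' : L) (h : l = l') :
    presHom F L (FreeLieAlgebra.of F l - FreeLieAlgebra.of F l') = 0 := by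
  rw [_root_.map_sub, presHom_of, presHom_of, h, sub_self]

/-- The morphism from the free Lie algebra on `L × L` to `F²/[R,F]`. -/
noncomputable def Phi0 : FreeLieAlgebra F (L × L) →ₗ⁅F⁆ Wq F L :=
  FreeLieAlgebra.lift F (fun p => toW F L (FreeLieAlgebra.of F p.1) (FreeLieAlgebra.of F p.2))

theorem Phi0_of (p : L × L) :
    Phi0 F L (FreeLieAlgebra.of F p) =
      toW F L (FreeLieAlgebra.of F p.1) (FreeLieAlgebra.of F p.2) :=
  FreeLieAlgebra.lift_of_apply _ p

theorem Phi0_rel : ∀ x ∈ tensorRel F L, Phi0 F L x = 0 := by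
  have hs : ∀ l : L, presHom F L (FreeLieAlgebra.of F l) = l := presHom_of F L
  rintro x hx
  rcases hx with ⟨c,a,b,rfl⟩|⟨c,a,b,rfl⟩|⟨a,a',b,rfl⟩|⟨a,b,b',rfl⟩|⟨a,a',b,rfl⟩|⟨a,b,b',rfl⟩|
    ⟨a,b,a',b',rfl⟩
  · rw [_root_.map_sub, _root_.map_smul, Phi0_of, Phi0_of]
    rw [toW_congr_left F L _ (x := FreeLieAlgebra.of F (c • a)) (x' := c • FreeLieAlgebra.of F a)
      (by rw [_root_.map_sub, _root_.map_smul, presHom_of, presHom_of, sub_self]),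
      toW_smul_left, sub_self]
  · rw [_root_.map_sub, _root_.map_smul, Phi0_of, Phi0_of]
    rw [toW_congr_right F L _ (y := FreeLieAlgebra.of F (c • b)) (y' := c • FreeLieAlgebra.of F b)
      (by rw [_root_.map_sub, _root_.map_smul, presHom_of, presHom_of, sub_self]),
      toW_smul_right, sub_self]
  · rw [_root_.map_sub, _root_.map_sub, Phi0_of, Phi0_of, Phi0_of]
    rw [toW_congr_left F L _
      (x := FreeLieAlgebra.of F (a + a'))
      (x' := FreeLieAlgebra.of F a + FreeLieAlgebra.of F a')
      (by rw [_root_.map_sub, _root_.map_add, presHom_of, presHom_of, presHom_of, sub_self]),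
      toW_add_left]
    abel
  · rw [_root_.map_sub, _root_.map_sub, Phi0_of, Phi0_of, Phi0_of]
    rw [toW_congr_right F L _
      (y := FreeLieAlgebra.of F (b + b'))
      (y' := FreeLieAlgebra.of F b + FreeLieAlgebra.of F b')
      (by rw [_root_.map_sub, _root_.map_add, presHom_of, presHom_of, presHom_of, sub_self])]
    have h2 : toW F L (FreeLieAlgebra.of F a)
        (FreeLieAlgebra.of F b + FreeLieAlgebra.of F b') =
        toW F L (FreeLieAlgebra.of F a) (FreeLieAlgebra.of F b) +
          toW F L (FreeLieAlgebra.of F a) (FreeLieAlgebra.of F b') := by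
      have h : sD F L (FreeLieAlgebra.of F a)
          (FreeLieAlgebra.of F b + FreeLieAlgebra.of F b') =
          sD F L (FreeLieAlgebra.of F a) (FreeLieAlgebra.of F b) +
            sD F L (FreeLieAlgebra.of F a) (FreeLieAlgebra.of F b') :=
        Subtype.ext (lie_add _ _ _)
      show LieSubmodule.Quotient.mk (N := Jsub F L) _ = _
      rw [h, Wmk_add]
      rfl
    rw [h2]
    abel
  · rw [_root_.map_add, _root_.map_sub, Phi0_of, Phi0_of, Phi0_of]
    rw [toW_congr_left F L _
      (x := FreeLieAlgebra.of F ⁅a, a'⁆)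
      (x' := ⁅FreeLieAlgebra.of F a, FreeLieAlgebra.of F a'⁆)
      (by rw [_root_.map_sub, LieHom.map_lie, presHom_of, presHom_of, presHom_of, sub_self]),
      toW_congr_right F L _
      (y := FreeLieAlgebra.of F ⁅a', b⁆)
      (y' := ⁅FreeLieAlgebra.of F a', FreeLieAlgebra.of F b⁆)
      (by rw [_root_.map_sub, LieHom.map_lie, presHom_of, presHom_of, presHom_of, sub_self]),
      toW_congr_right F L _
      (y := FreeLieAlgebra.of F ⁅a, b⁆)
      (y' := ⁅FreeLieAlgebra.of F a, FreeLieAlgebra.of F b⁆)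
      (by rw [_root_.map_sub, LieHom.map_lie, presHom_of, presHom_of, presHom_of, sub_self])]
    exact toW_jacobi F L _ _ _
  · rw [_root_.map_add, _root_.map_sub, Phi0_of, Phi0_of, Phi0_of]
    rw [toW_congr_right F L _
      (y := FreeLieAlgebra.of F ⁅b, b'⁆)
      (y' := ⁅FreeLieAlgebra.of F b, FreeLieAlgebra.of F b'⁆)
      (by rw [_root_.map_sub, LieHom.map_lie, presHom_of, presHom_of, presHom_of, sub_self]),
      toW_congr_left F L _
      (x := FreeLieAlgebra.of F ⁅b', a⁆)
      (x' := ⁅FreeLieAlgebra.of F b', FreeLieAlgebra.of F a⁆)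
      (by rw [_root_.map_sub, LieHom.map_lie, presHom_of, presHom_of, presHom_of, sub_self]),
      toW_congr_left F L _
      (x := FreeLieAlgebra.of F ⁅b, a⁆)
      (x' := ⁅FreeLieAlgebra.of F b, FreeLieAlgebra.of F a⁆)
      (by rw [_root_.map_sub, LieHom.map_lie, presHom_of, presHom_of, presHom_of, sub_self])]
    exact toW_rel6 F L _ _ _
  · rw [_root_.map_add, LieHom.map_lie, Phi0_of, Phi0_of, Phi0_of, toW_bracket]
    rw [toW_congr_left F L _
      (x := FreeLieAlgebra.of F ⁅b, a⁆)
      (x' := ⁅FreeLieAlgebra.of F b, FreeLieAlgebra.of F a⁆)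
      (by rw [_root_.map_sub, LieHom.map_lie, presHom_of, presHom_of, presHom_of, sub_self]),
      toW_congr_right F L _
      (y := FreeLieAlgebra.of F ⁅a', b'⁆)
      (y' := ⁅FreeLieAlgebra.of F a', FreeLieAlgebra.of F b'⁆)
      (by rw [_root_.map_sub, LieHom.map_lie, presHom_of, presHom_of, presHom_of, sub_self])]
    have h0 : (⁅FreeLieAlgebra.of F a, FreeLieAlgebra.of F b⁆ : FreeLieAlgebra F L) +
        ⁅FreeLieAlgebra.of F b, FreeLieAlgebra.of F a⁆ = 0 := by
      rw [← lie_skew (FreeLieAlgebra.of F a) (FreeLieAlgebra.of F b)]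
      abel
    have := toW_add_left F L ⁅FreeLieAlgebra.of F a, FreeLieAlgebra.of F b⁆
      ⁅FreeLieAlgebra.of F b, FreeLieAlgebra.of F a⁆
      ⁅FreeLieAlgebra.of F a', FreeLieAlgebra.of F b'⁆
    rw [h0] at this
    rw [← this, toW_zero_left F L (by rw [_root_.map_zero]) _]

theorem Phi0_span_rel : ∀ x ∈ Irel, Phi0 F L x = 0 := by
  intro x hx
  have h : Irel ≤ (Phi0 F L).ker := by
    rw [LieSubmodule.lieSpan_le]
    intro y hy
    exact LieHom.mem_ker.mpr (Phi0_rel F L y hy)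
  exact LieHom.mem_ker.mp (h hx)

noncomputable def Phi1 : NTensor F L →ₗ⁅F⁆ Wq F L :=
  lieQuotLift Irel (Phi0 F L) (Phi0_span_rel F L)

theorem Phi1_tmk (a b : L) :
    Phi1 F L (tmk F L a b) = toW F L (FreeLieAlgebra.of F a) (FreeLieAlgebra.of F b) := by
  show Phi1 F L (LieSubmodule.Quotient.mk (N := Irel) (FreeLieAlgebra.of F (a, b))) = _
  rw [Phi1, lieQuotLift_mk, Phi0_of]

theorem Phi1_sq : ∀ x ∈ sqIdeal F L, Phi1 F L x = 0 := by
  intro x hx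
  have h : sqIdeal F L ≤ (Phi1 F L).ker := by
    rw [sqIdeal, LieSubmodule.lieSpan_le]
    rintro y ⟨a, rfl⟩
    refine LieHom.mem_ker.mpr ?_
    rw [Phi1_tmk]
    have h0 : sD F L (FreeLieAlgebra.of F a) (FreeLieAlgebra.of F a) = 0 :=
      Subtype.ext (lie_self _)
    show LieSubmodule.Quotient.mk (N := Jsub F L) _ = 0
    rw [h0, Wmk_zero]
  exact LieHom.mem_ker.mp (h hx)

/-- The isomorphism `L ∧ L → F²/[R,F]` (as a morphism). -/
noncomputable def Phi : ExtSq F L →ₗ⁅F⁆ Wq F L :=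
  lieQuotLift (sqIdeal F L) (Phi1 F L) (Phi1_sq F L)

theorem Phi_wmk (a b : L) :
    Phi F L (wmk F L a b) = toW F L (FreeLieAlgebra.of F a) (FreeLieAlgebra.of F b) := by
  rw [wmk_eq, Phi, lieQuotLift_mk, Phi1_tmk]

/-- Auxiliary Lie algebra structure on `(L ∧ L) × L` with bracket
`⁅(m, a), (m', a')⁆ = (a ∧ a', ⁅a, a'⁆)`. -/
def EE : Type u := ExtSq F L × L

private noncomputable def eeBr : ExtSq F L × L → ExtSq F L × L → ExtSq F L × L :=
  fun p q => (wmk F L p.2 q.2, ⁅p.2, q.2⁆)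

noncomputable instance : AddCommGroup (EE F L) :=
  inferInstanceAs (AddCommGroup (ExtSq F L × L))

noncomputable instance : Module F (EE F L) :=
  inferInstanceAs (Module F (ExtSq F L × L))

noncomputable instance : LieRing (EE F L) where
  bracket x y := eeBr F L x y
  add_lie x y z := by
    show eeBr F L ((x : ExtSq F L × L) + y) z =
      eeBr F L (x : ExtSq F L × L) z + eeBr F L (y : ExtSq F L × L) z
    refine Prod.ext ?_ ?_
    · show wmk F L ((x : ExtSq F L × L).2 + (y : ExtSq F L × L).2) (z : ExtSq F L × L).2 = _
      rw [wmk_add_left]; rfl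
    · show (⁅(x : ExtSq F L × L).2 + (y : ExtSq F L × L).2, (z : ExtSq F L × L).2⁆ : L) = _
      rw [add_lie]; rfl
  lie_add x y z := by
    show eeBr F L x ((y : ExtSq F L × L) + z) =
      eeBr F L (x : ExtSq F L × L) y + eeBr F L (x : ExtSq F L × L) z
    refine Prod.ext ?_ ?_
    · show wmk F L (x : ExtSq F L × L).2 ((y : ExtSq F L × L).2 + (z : ExtSq F L × L).2) = _
      rw [wmk_add_right]; rfl
    · show (⁅(x : ExtSq F L × L).2, (y : ExtSq F L × L).2 + (z : ExtSq F L × L).2⁆ : L) = _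
      rw [lie_add]; rfl
  lie_self x := by
    show eeBr F L x x = 0
    refine Prod.ext ?_ ?_
    · show wmk F L (x : ExtSq F L × L).2 (x : ExtSq F L × L).2 = 0
      rw [wmk_self]
    · show (⁅(x : ExtSq F L × L).2, (x : ExtSq F L × L).2⁆ : L) = 0
      rw [lie_self]
  leibniz_lie x y z := by
    show eeBr F L x (eeBr F L y z) = eeBr F L (eeBr F L x y) z + eeBr F L y (eeBr F L x z)
    refine Prod.ext ?_ ?_
    · show wmk F L (x : ExtSq F L × L).2 ⁅(y : ExtSq F L × L).2, (z : ExtSq F L × L).2⁆ = _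
      rw [wmk_leibniz]; rfl
    · show (⁅(x : ExtSq F L × L).2, ⁅(y : ExtSq F L × L).2, (z : ExtSq F L × L).2⁆⁆ : L) = _
      rw [leibniz_lie]; rfl

noncomputable instance : LieAlgebra F (EE F L) where
  lie_smul c x y := by
    show eeBr F L x (c • (y : ExtSq F L × L)) = c • eeBr F L x (y : ExtSq F L × L)
    refine Prod.ext ?_ ?_
    · show wmk F L (x : ExtSq F L × L).2 (c • (y : ExtSq F L × L).2) = _
      rw [wmk_smul_right]; rfl
    · show (⁅(x : ExtSq F L × L).2, c • (y : ExtSq F L × L).2⁆ : L) = _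
      rw [lie_smul]; rfl

/-- Projection `EE → L` as a morphism of Lie algebras. -/
noncomputable def eeSnd : EE F L →ₗ⁅F⁆ L :=
  { (LinearMap.snd F (ExtSq F L) L : EE F L →ₗ[F] L) with
    map_lie' := by intro x y; rfl }

/-- Projection `EE → L ∧ L`, linear. -/
noncomputable def eeFst : EE F L →ₗ[F] ExtSq F L :=
  (LinearMap.fst F (ExtSq F L) L : EE F L →ₗ[F] ExtSq F L)

/-- The crossed pairing morphism `F → EE`. -/
noncomputable def Psi : FreeLieAlgebra F L →ₗ⁅F⁆ EE F L :=
  FreeLieAlgebra.lift F (fun l => ((0 : ExtSq F L), l))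

theorem Psi_snd (x : FreeLieAlgebra F L) : eeSnd F L (Psi F L x) = presHom F L x := by
  have h : (eeSnd F L).comp (Psi F L) = presHom F L := by
    apply FreeLieAlgebra.hom_ext
    intro l
    have hof : Psi F L (FreeLieAlgebra.of F l) = ((0 : ExtSq F L), l) :=
      FreeLieAlgebra.lift_of_apply _ l
    show eeSnd F L (Psi F L (FreeLieAlgebra.of F l)) = presHom F L (FreeLieAlgebra.of F l)
    rw [hof, presHom_of]
    rfl
  exact LieHom.congr_fun h x

/-- The linear map `F → L ∧ L` measuring wedge classes of brackets. -/
noncomputable def psiT : FreeLieAlgebra F L →ₗ[F] ExtSq F L :=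
  (eeFst F L).comp (Psi F L).toLinearMap

theorem psiT_lie (x y : FreeLieAlgebra F L) :
    psiT F L ⁅x, y⁆ = wmk F L (presHom F L x) (presHom F L y) := by
  show eeFst F L (Psi F L ⁅x, y⁆) = _
  rw [LieHom.map_lie]
  show wmk F L (eeSnd F L (Psi F L x)) (eeSnd F L (Psi F L y)) = _
  rw [Psi_snd, Psi_snd]

theorem psiT_J : ∀ z ∈ Jideal, psiT F L z = 0 := by
  intro z hz
  have hz' : z ∈ Submodule.span F {m | ∃ x ∈ presKer F L,
      ∃ n ∈ (⊤ : LieIdeal F (FreeLieAlgebra F L)), ⁅x, n⁆ = m} := by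
    rw [← LieSubmodule.lieIdeal_oper_eq_linear_span']
    exact hz
  refine Submodule.span_induction ?_ ?_ ?_ ?_ hz'
  · rintro w ⟨x, hx, n, -, rfl⟩
    rw [psiT_lie, mem_presKer_iff F L |>.mp hx, wmk_zero_left]
  · exact map_zero _
  · intro u v _ _ hu hv
    rw [map_add, hu, hv, add_zero]
  · intro c u _ hu
    rw [_root_.map_smul, hu, smul_zero]

/-- The retraction `F²/[R,F] → L ∧ L`. -/
noncomputable def rhoW : Wq F L →ₗ[F] ExtSq F L :=
  Submodule.liftQ (Jsub F L).toSubmodule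
    ((psiT F L).comp (derivedSeries F (FreeLieAlgebra F L) 1).toSubmodule.subtype)
    (by
      intro x hx
      exact psiT_J F L x hx)

theorem rhoW_mk (d : ↥(derivedSeries F (FreeLieAlgebra F L) 1)) :
    rhoW F L (LieSubmodule.Quotient.mk (N := Jsub F L) d) = psiT F L d := rfl

theorem rho_Phi_wmk (a b : L) : rhoW F L (Phi F L (wmk F L a b)) = wmk F L a b := by
  rw [Phi_wmk]
  show psiT F L ⁅FreeLieAlgebra.of F a, FreeLieAlgebra.of F b⁆ = _
  rw [psiT_lie, presHom_of, presHom_of]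

theorem Phi_injective : Function.Injective (Phi F L) := by
  have h : (rhoW F L).comp (Phi F L).toLinearMap = LinearMap.id := by
    apply extsq_ext
    intro a b
    show rhoW F L (Phi F L (wmk F L a b)) = wmk F L a b
    exact rho_Phi_wmk F L a b
  intro x y hxy
  have := congrArg (rhoW F L) hxy
  have hx := LinearMap.congr_fun h x
  have hy := LinearMap.congr_fun h y
  show x = y
  rw [LinearMap.id_apply] at hx hy
  rw [← hx, ← hy]
  exact this

theorem derived_one_eq' (K : Type u) [LieRing K] [LieAlgebra F K] :
    derivedSeries F K 1 = ⁅(⊤ : LieIdeal F K), (⊤ : LieIdeal F K)⁆ := by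
  rw [LieAlgebra.derivedSeries_def, LieAlgebra.derivedSeriesOfIdeal_succ,
    LieAlgebra.derivedSeriesOfIdeal_zero]

theorem lie_mem_derived' {K : Type u} [LieRing K] [LieAlgebra F K] (x y : K) :
    ⁅x, y⁆ ∈ derivedSeries F K 1 := by
  rw [derived_one_eq' F K]
  exact LieSubmodule.lie_mem_lie (LieSubmodule.mem_top x) (LieSubmodule.mem_top y)

theorem Phi_surjective : Function.Surjective (Phi F L) := by
  have hDcoe : LieSubmodule.toSubmodule (derivedSeries F (FreeLieAlgebra F L) 1) =
      Submodule.span F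
        {m : FreeLieAlgebra F L | ∃ x ∈ (⊤ : LieIdeal F (FreeLieAlgebra F L)),
          ∃ n ∈ (⊤ : LieIdeal F (FreeLieAlgebra F L)), ⁅x, n⁆ = m} := by
    rw [derived_one_eq]
    exact LieSubmodule.lieIdeal_oper_eq_linear_span' _ _
  have toD : ∀ z : FreeLieAlgebra F L, z ∈ Submodule.span F
      {m : FreeLieAlgebra F L | ∃ x ∈ (⊤ : LieIdeal F (FreeLieAlgebra F L)),
        ∃ n ∈ (⊤ : LieIdeal F (FreeLieAlgebra F L)), ⁅x, n⁆ = m} →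
      z ∈ derivedSeries F (FreeLieAlgebra F L) 1 := by
    intro z hz
    have h2 : z ∈ LieSubmodule.toSubmodule (derivedSeries F (FreeLieAlgebra F L) 1) := by
      rw [hDcoe]
      exact hz
    exact h2
  have key : ∀ z : FreeLieAlgebra F L, z ∈ Submodule.span F
      {m : FreeLieAlgebra F L | ∃ x ∈ (⊤ : LieIdeal F (FreeLieAlgebra F L)),
        ∃ n ∈ (⊤ : LieIdeal F (FreeLieAlgebra F L)), ⁅x, n⁆ = m} →
      ∀ hd : z ∈ derivedSeries F (FreeLieAlgebra F L) 1,
        ∃ ξ : ExtSq F L, Phi F L ξ =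
          LieSubmodule.Quotient.mk (N := Jsub F L) ⟨z, hd⟩ := by
    intro z hz
    refine Submodule.span_induction ?_ ?_ ?_ ?_ hz
    · rintro w ⟨x, -, n, -, rfl⟩
      intro hd
      refine ⟨wmk F L (presHom F L x) (presHom F L n), ?_⟩
      rw [Phi_wmk]
      have hmem : sD F L (FreeLieAlgebra.of F (presHom F L x))
          (FreeLieAlgebra.of F (presHom F L n)) - ⟨⁅x, n⁆, hd⟩ ∈ Jsub F L := by
        rw [mem_Jsub]
        have hid : (⁅FreeLieAlgebra.of F (presHom F L x), FreeLieAlgebra.of F (presHom F L n)⁆ :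
            FreeLieAlgebra F L) - ⁅x, n⁆ =
            ⁅FreeLieAlgebra.of F (presHom F L x) - x, FreeLieAlgebra.of F (presHom F L n)⁆ +
              ⁅x, FreeLieAlgebra.of F (presHom F L n) - n⁆ := by
          rw [sub_lie, lie_sub]
          abel
        show (⁅FreeLieAlgebra.of F (presHom F L x), FreeLieAlgebra.of F (presHom F L n)⁆ :
          FreeLieAlgebra F L) - ⁅x, n⁆ ∈ Jideal
        rw [hid]
        refine add_mem (mem_J_left F L _ ?_) (mem_J_right F L _ ?_)
        · rw [_root_.map_sub, presHom_of, sub_self]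
        · rw [_root_.map_sub, presHom_of, sub_self]
      have h0 := LieSubmodule.Quotient.mk_eq_zero'.mpr hmem
      rw [Wmk_sub] at h0
      exact sub_eq_zero.mp h0
    · intro hd
      refine ⟨0, ?_⟩
      have : (⟨(0 : FreeLieAlgebra F L), hd⟩ :
          ↥(derivedSeries F (FreeLieAlgebra F L) 1)) = 0 := Subtype.ext rfl
      rw [this, _root_.map_zero, Wmk_zero]
    · intro z₁ z₂ hz₁ hz₂ ih₁ ih₂ hd
      obtain ⟨ξ₁, h₁⟩ := ih₁ (toD z₁ hz₁)
      obtain ⟨ξ₂, h₂⟩ := ih₂ (toD z₂ hz₂)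
      refine ⟨ξ₁ + ξ₂, ?_⟩
      have : (⟨z₁ + z₂, hd⟩ : ↥(derivedSeries F (FreeLieAlgebra F L) 1)) =
          ⟨z₁, toD z₁ hz₁⟩ + ⟨z₂, toD z₂ hz₂⟩ := Subtype.ext rfl
      rw [_root_.map_add, h₁, h₂, this, Wmk_add]
    · intro c z₁ hz₁ ih hd
      obtain ⟨ξ₁, h₁⟩ := ih (toD z₁ hz₁)
      refine ⟨c • ξ₁, ?_⟩
      have : (⟨c • z₁, hd⟩ : ↥(derivedSeries F (FreeLieAlgebra F L) 1)) =
          c • ⟨z₁, toD z₁ hz₁⟩ := Subtype.ext rfl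
      rw [_root_.map_smul, h₁, this, Wmk_smul]
  intro w
  obtain ⟨d, rfl⟩ := LieSubmodule.Quotient.surjective_mk' (Jsub F L) w
  have hd : (d : FreeLieAlgebra F L) ∈ derivedSeries F (FreeLieAlgebra F L) 1 := d.2
  have hz : (d : FreeLieAlgebra F L) ∈ Submodule.span F
      {m : FreeLieAlgebra F L | ∃ x ∈ (⊤ : LieIdeal F (FreeLieAlgebra F L)),
        ∃ n ∈ (⊤ : LieIdeal F (FreeLieAlgebra F L)), ⁅x, n⁆ = m} := by
    rw [← hDcoe]
    exact hd
  obtain ⟨ξ, hξ⟩ := key _ hz hd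
  exact ⟨ξ, hξ⟩

/-- The map `F²/[R,F] → L` induced by the presentation. -/
noncomputable def pibar : Wq F L →ₗ[F] L :=
  Submodule.liftQ (Jsub F L).toSubmodule
    ((presHom F L).toLinearMap.comp
      (derivedSeries F (FreeLieAlgebra F L) 1).toSubmodule.subtype)
    (by
      intro x hx
      rw [LinearMap.mem_ker]
      exact (mem_presKer_iff F L).mp (J_le_R F L hx))

theorem pibar_mk (d : ↥(derivedSeries F (FreeLieAlgebra F L) 1)) :
    pibar F L (LieSubmodule.Quotient.mk (N := Jsub F L) d) = presHom F L d := rfl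

theorem kappa_factor (x : ExtSq F L) : kappa F L x = pibar F L (Phi F L x) := by
  have h : (kappa F L).toLinearMap = (pibar F L).comp (Phi F L).toLinearMap := by
    apply extsq_ext
    intro a b
    show kappa F L (wmk F L a b) = pibar F L (Phi F L (wmk F L a b))
    rw [kappa_wmk, Phi_wmk]
    show ⁅a, b⁆ = presHom F L ⁅FreeLieAlgebra.of F a, FreeLieAlgebra.of F b⁆
    rw [LieHom.map_lie, presHom_of, presHom_of]
  exact LinearMap.congr_fun h x

theorem kappa_range_iff (y : L) :
    y ∈ derivedSeries F L 1 ↔ ∃ x, kappa F L x = y := by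
  constructor
  · intro hy
    have hy' : y ∈ Submodule.span F {m : L | ∃ x ∈ (⊤ : LieIdeal F L),
        ∃ n ∈ (⊤ : LieIdeal F L), ⁅x, n⁆ = m} := by
      rw [← LieSubmodule.lieIdeal_oper_eq_linear_span', ← derived_one_eq' F L]
      exact hy
    refine Submodule.span_induction ?_ ?_ ?_ ?_ hy'
    · rintro m ⟨x, -, n, -, rfl⟩
      exact ⟨wmk F L x n, kappa_wmk F L x n⟩
    · exact ⟨0, _root_.map_zero _⟩
    · rintro u v - - ⟨xu, rfl⟩ ⟨xv, rfl⟩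
      exact ⟨xu + xv, _root_.map_add _ _ _⟩
    · rintro c u - ⟨xu, rfl⟩
      exact ⟨c • xu, _root_.map_smul _ _ _⟩
  · rintro ⟨x, rfl⟩
    have hx : x ∈ Submodule.span F {z : ExtSq F L | ∃ a b : L, z = wmk F L a b} := by
      rw [extsq_span_top]
      exact Submodule.mem_top
    refine Submodule.span_induction ?_ ?_ ?_ ?_ hx
    · rintro z ⟨a, b, rfl⟩
      rw [kappa_wmk]
      exact lie_mem_derived' F a b
    · rw [_root_.map_zero]
      exact (derivedSeries F L 1).toSubmodule.zero_mem
    · intro u v _ _ hu hv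
      rw [_root_.map_add]
      exact (derivedSeries F L 1).toSubmodule.add_mem hu hv
    · intro c u _ hu
      rw [_root_.map_smul]
      exact (derivedSeries F L 1).toSubmodule.smul_mem c hu

/-- `Φ` as a linear equivalence. -/
noncomputable def eW : ExtSq F L ≃ₗ[F] Wq F L :=
  LinearEquiv.ofBijective (Phi F L).toLinearMap
    ⟨by exact Phi_injective F L, by exact Phi_surjective F L⟩

noncomputable def e0 : ↥((kappa F L).ker) ≃ₗ[F]
    ↥(Submodule.comap (Phi F L).toLinearMap (LinearMap.ker (pibar F L))) where
  toFun x := ⟨x.1, by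
    rw [Submodule.mem_comap, LinearMap.mem_ker]
    show pibar F L (Phi F L x.1) = 0
    rw [← kappa_factor]
    exact LieHom.mem_ker.mp x.2⟩
  invFun x := ⟨x.1, LieHom.mem_ker.mpr (by
    rw [kappa_factor]
    have h := x.2
    rw [Submodule.mem_comap, LinearMap.mem_ker] at h
    exact h)⟩
  map_add' _ _ := rfl
  map_smul' _ _ := rfl
  left_inv _ := rfl
  right_inv _ := rfl

theorem map_eW_comap :
    Submodule.map ((eW F L : ExtSq F L ≃ₗ[F] Wq F L) : ExtSq F L →ₗ[F] Wq F L)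
      (Submodule.comap (Phi F L).toLinearMap (LinearMap.ker (pibar F L))) =
      LinearMap.ker (pibar F L) := by
  have h : ((eW F L : ExtSq F L ≃ₗ[F] Wq F L) : ExtSq F L →ₗ[F] Wq F L) =
      (Phi F L).toLinearMap := rfl
  rw [h]
  have hs : Function.Surjective ⇑(Phi F L).toLinearMap := by exact Phi_surjective F L
  exact Submodule.map_comap_eq_of_surjective hs _

noncomputable def e1 : ↥(Submodule.comap (Phi F L).toLinearMap (LinearMap.ker (pibar F L)))
    ≃ₗ[F] ↥(LinearMap.ker (pibar F L)) :=
  ((eW F L).submoduleMap _).trans (LinearEquiv.ofEq _ _ (map_eW_comap F L))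

theorem inf_le_D : (presKer F L ⊓ derivedSeries F (FreeLieAlgebra F L) 1).toSubmodule ≤
    (derivedSeries F (FreeLieAlgebra F L) 1).toSubmodule := by
  intro x hx
  have h : x ∈ presKer F L ⊓ derivedSeries F (FreeLieAlgebra F L) 1 := hx
  exact ((LieSubmodule.mem_inf _ _ _).mp h).2

/-- The natural map `(R ∩ F²) → F²/[R,F]`. -/
noncomputable def muM :
    ↥((presKer F L ⊓ derivedSeries F (FreeLieAlgebra F L) 1).toSubmodule) →ₗ[F] Wq F L :=
  ((Jsub F L).toSubmodule.mkQ.comp (Submodule.inclusion (inf_le_D F L)) :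
    _ →ₗ[F] (↥(derivedSeries F (FreeLieAlgebra F L) 1) ⧸ (Jsub F L).toSubmodule))

theorem ker_muM : LinearMap.ker (muM F L) =
    Submodule.comap ((presKer F L ⊓ derivedSeries F (FreeLieAlgebra F L) 1).toSubmodule).subtype
      (⁅presKer F L, (⊤ : LieIdeal F (FreeLieAlgebra F L))⁆ :
        LieIdeal F (FreeLieAlgebra F L)).toSubmodule := by
  ext x
  rw [LinearMap.mem_ker, Submodule.mem_comap]
  show ((Jsub F L).toSubmodule.mkQ (Submodule.inclusion (inf_le_D F L) x) = 0) ↔ _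
  rw [Submodule.mkQ_apply, Submodule.Quotient.mk_eq_zero]
  constructor
  · intro h; exact h
  · intro h; exact h

theorem range_muM : LinearMap.range (muM F L) = LinearMap.ker (pibar F L) := by
  apply le_antisymm
  · rintro _ ⟨x, rfl⟩
    rw [LinearMap.mem_ker]
    show pibar F L (LieSubmodule.Quotient.mk (N := Jsub F L)
      (Submodule.inclusion (inf_le_D F L) x)) = 0
    show presHom F L ↑x = 0
    have hx : (x : FreeLieAlgebra F L) ∈
        presKer F L ⊓ derivedSeries F (FreeLieAlgebra F L) 1 := x.2
    exact (mem_presKer_iff F L).mp (((LieSubmodule.mem_inf _ _ _).mp hx).1)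
  · intro w hw
    obtain ⟨d, rfl⟩ := LieSubmodule.Quotient.surjective_mk' (Jsub F L) w
    rw [LinearMap.mem_ker] at hw
    replace hw : presHom F L (d : FreeLieAlgebra F L) = 0 := hw
    have hR : (d : FreeLieAlgebra F L) ∈ presKer F L := (mem_presKer_iff F L).mpr hw
    refine ⟨⟨(d : FreeLieAlgebra F L), ?_⟩, ?_⟩
    · show (d : FreeLieAlgebra F L) ∈ presKer F L ⊓ derivedSeries F (FreeLieAlgebra F L) 1
      exact (LieSubmodule.mem_inf _ _ _).mpr ⟨hR, d.2⟩
    · show LieSubmodule.Quotient.mk (N := Jsub F L)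
        (Submodule.inclusion (inf_le_D F L) _) = LieSubmodule.Quotient.mk (N := Jsub F L) d
      exact congrArg _ (Subtype.ext rfl)

/-- Identification of the Schur multiplier with the kernel of `F²/[R,F] → L`. -/
noncomputable def eMu : Multiplier F L ≃ₗ[F] ↥(LinearMap.ker (pibar F L)) :=
  (Submodule.quotEquivOfEq _ _ (ker_muM F L).symm).trans
    ((muM F L).quotKerEquivRange.trans (LinearEquiv.ofEq _ _ (range_muM F L)))

end SES
/-- the short exact sequence `0 → M(L) → L ∧ L → L² → 0`. -/
theorem multiplier_exterior_exact_sequence (F : Type u) [Field F]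
    (L : Type u) [LieRing L] [LieAlgebra F L] :
    ∃ κ : ExtSq F L →ₗ⁅F⁆ L,
      (∀ a b : L, κ (wmk F L a b) = ⁅a, b⁆) ∧
      (∀ y : L, y ∈ derivedSeries F L 1 ↔ ∃ x, κ x = y) ∧
      Nonempty (↥(κ.ker) ≃ₗ[F] Multiplier F L) := by
  refine ⟨kappa F L, fun a b => kappa_wmk F L a b, fun y => kappa_range_iff F L y, ?_⟩
  exact ⟨(e0 F L).trans ((e1 F L).trans (eMu F L).symm)⟩
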